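/- Let d ≥ 2, let L be a linear map on Matrix (Fin d) (Fin d) ℂ, and suppose there exist ε₀ > 0 and a family (E_ε)_{0 < ε < ε₀} of quantum channels on Matrix (Fin d) (Fin d) ℂ such that (E_ε − id)/ε converges to L as ε → 0⁺ in the norm topology on linear maps. Then L is conditionally completely positive: with ω = (1/d) Σ_{i,j} E_{ij} ⊗ₖ E_{ij} and τ_L = (1/d) Σ_{i,j} E_{ij} ⊗ₖ L(E_{ij}), the matrix (1 − ω) * τ_L * (1 − ω) is positive semidefinite. -/

import Mathlib

open scoped Kronecker ComplexOrder Matrix Topology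

attribute [local instance] Matrix.frobeniusNormedAddCommGroup Matrix.frobeniusNormedSpace

noncomputable section

/-- The block of `M` at position `(a, b)` when `M` is viewed as a block matrix. -/
def blockAt {k n : ℕ} (M : Matrix (Fin k × Fin n) (Fin k × Fin n) ℂ) (a b : Fin k) :
    Matrix (Fin n) (Fin n) ℂ :=
  Matrix.of fun i j => M (a, i) (b, j)

/-- The extension `id_k ⊗ Φ` of a continuous linear map `Φ` acting blockwise. -/
def matExtend {n : ℕ} (k : ℕ)
    (Φ : Matrix (Fin n) (Fin n) ℂ →L[ℂ] Matrix (Fin n) (Fin n) ℂ)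
    (M : Matrix (Fin k × Fin n) (Fin k × Fin n) ℂ) :
    Matrix (Fin k × Fin n) (Fin k × Fin n) ℂ :=
  ∑ a : Fin k, ∑ b : Fin k,
    (Matrix.single a b (1 : ℂ)) ⊗ₖ Φ (blockAt M a b)

/-- A quantum channel: a completely positive and trace-preserving (continuous) linear map. -/
def IsQuantumChannel {n : ℕ}
    (Φ : Matrix (Fin n) (Fin n) ℂ →L[ℂ] Matrix (Fin n) (Fin n) ℂ) : Prop :=
  (∀ k : ℕ, 1 ≤ k → ∀ M : Matrix (Fin k × Fin n) (Fin k × Fin n) ℂ,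
    M.PosSemidef → (matExtend k Φ M).PosSemidef) ∧
  (∀ X, (Φ X).trace = X.trace)

/-- The (normalized) maximally entangled projector `ω = (1/d) ∑ i j, E i j ⊗ₖ E i j`. -/
def omegaMat (d : ℕ) : Matrix (Fin d × Fin d) (Fin d × Fin d) ℂ :=
  (1 / (d : ℂ)) • ∑ i : Fin d, ∑ j : Fin d,
    (Matrix.single i j (1 : ℂ)) ⊗ₖ (Matrix.single i j (1 : ℂ))

/-- The Choi–Jamiołkowski matrix `τ_L = (1/d) ∑ i j, E i j ⊗ₖ L (E i j)` of a map. -/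
def cjMat {d : ℕ} (L : Matrix (Fin d) (Fin d) ℂ →L[ℂ] Matrix (Fin d) (Fin d) ℂ) :
    Matrix (Fin d × Fin d) (Fin d × Fin d) ℂ :=
  (1 / (d : ℂ)) • ∑ i : Fin d, ∑ j : Fin d,
    (Matrix.single i j (1 : ℂ)) ⊗ₖ L (Matrix.single i j (1 : ℂ))

/-! ### Auxiliary lemmas -/

/-- The vectorization of the identity matrix, as a `d² × 1` matrix. -/
def wMat (d : ℕ) : Matrix (Fin d × Fin d) (Fin 1) ℂ :=
  Matrix.of fun p _ => if p.1 = p.2 then 1 else 0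

lemma omegaMat_eq (d : ℕ) : omegaMat d = (d : ℂ)⁻¹ • (wMat d * (wMat d)ᴴ) := by
  ext ⟨a, b⟩ ⟨c, e⟩
  have : (∑ i : Fin d, ∑ j : Fin d,
      ((Matrix.single i j (1 : ℂ)) ⊗ₖ (Matrix.single i j (1 : ℂ)))) (a, b) (c, e)
      = if a = b ∧ c = e then 1 else 0 := by
    simp only [Finset.sum_apply, Matrix.sum_apply, Matrix.kroneckerMap_apply,
      Matrix.single, Matrix.of_apply, ite_and]
    simp [Finset.sum_ite_eq, eq_comm, ite_and]
  simp [omegaMat, wMat, Matrix.mul_apply, this, Matrix.conjTranspose_apply, one_div, ite_and]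
  aesop

lemma wMat_conj_mul (d : ℕ) : (wMat d)ᴴ * wMat d = (d : ℂ) • 1 := by
  ext i j
  fin_cases i; fin_cases j
  simp [wMat, Matrix.mul_apply, Matrix.conjTranspose_apply, apply_ite, Fintype.sum_prod_type]

lemma psd_smul_ofReal {m : Type*} [Fintype m] {A : Matrix m m ℂ} (hA : A.PosSemidef)
    {r : ℝ} (hr : 0 ≤ r) : ((r : ℂ) • A).PosSemidef := by
  rw [Matrix.posSemidef_iff_dotProduct_mulVec]
  constructor
  · rw [Matrix.IsHermitian, Matrix.conjTranspose_smul, Complex.star_def, Complex.conj_ofReal,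
      hA.1.eq]
  · intro x
    rw [Matrix.smul_mulVec, dotProduct_smul, smul_eq_mul]
    exact mul_nonneg (by exact_mod_cast hr) (hA.dotProduct_mulVec_nonneg x)

lemma isClosed_posSemidef {m : Type*} [Fintype m] [DecidableEq m] :
    IsClosed {A : Matrix m m ℂ | A.PosSemidef} := by
  have h1 : {A : Matrix m m ℂ | A.PosSemidef} =
      ((fun A : Matrix m m ℂ => Aᴴ - A) ⁻¹' {0}) ∩
      ⋂ x : m → ℂ, (fun A : Matrix m m ℂ =>
        dotProduct (star x) (A *ᵥ x)) ⁻¹' {z : ℂ | 0 ≤ z} := by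
    ext A
    simp only [Set.mem_setOf_eq, Set.mem_inter_iff, Set.mem_preimage, Set.mem_singleton_iff,
      Set.mem_iInter, sub_eq_zero]
    exact ⟨fun h => ⟨h.1.eq, h.dotProduct_mulVec_nonneg⟩, fun h => .of_dotProduct_mulVec_nonneg h.1 h.2⟩
  rw [h1]
  have hherm : Continuous (fun A : Matrix m m ℂ => Aᴴ - A) := by
    have : IsLinearMap ℝ (fun A : Matrix m m ℂ => Aᴴ - A) := by
      constructor
      · intro A B; rw [Matrix.conjTranspose_add]; abel
      · intro r A
        rw [Matrix.conjTranspose_smul, star_trivial, smul_sub]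
    exact (this.mk' _).continuous_of_finiteDimensional
  refine IsClosed.inter ((isClosed_singleton).preimage hherm) (isClosed_iInter fun x => ?_)
  have hq : Continuous (fun A : Matrix m m ℂ =>
      dotProduct (star x) (A *ᵥ x)) := by
    have : IsLinearMap ℂ (fun A : Matrix m m ℂ =>
        dotProduct (star x) (A *ᵥ x)) := by
      constructor
      · intro A B; rw [Matrix.add_mulVec, dotProduct_add]
      · intro c A; rw [Matrix.smul_mulVec, dotProduct_smul]
    exact (this.mk' _).continuous_of_finiteDimensional
  exact isClosed_Ici.preimage hq

lemma blockAt_omega {d : ℕ} (a b : Fin d) :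
    blockAt (omegaMat d) a b = (d : ℂ)⁻¹ • Matrix.single a b (1 : ℂ) := by
  ext i j
  have : (∑ p : Fin d, ∑ q : Fin d,
      ((Matrix.single p q (1 : ℂ)) ⊗ₖ (Matrix.single p q (1 : ℂ)))) (a, i) (b, j)
      = if a = i ∧ b = j then 1 else 0 := by
    simp only [Finset.sum_apply, Matrix.sum_apply, Matrix.kroneckerMap_apply,
      Matrix.single, Matrix.of_apply, ite_and]
    simp [Finset.sum_ite_eq, eq_comm, ite_and]
  simp only [blockAt, Matrix.of_apply, omegaMat, Matrix.smul_apply, smul_eq_mul, one_div]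
  rw [this]
  simp [Matrix.single, ite_and]

lemma matExtend_omega {d : ℕ}
    (Φ : Matrix (Fin d) (Fin d) ℂ →L[ℂ] Matrix (Fin d) (Fin d) ℂ) :
    matExtend d Φ (omegaMat d) = cjMat Φ := by
  unfold matExtend cjMat
  rw [Finset.smul_sum]
  refine Finset.sum_congr rfl fun a _ => ?_
  rw [Finset.smul_sum]
  refine Finset.sum_congr rfl fun b _ => ?_
  rw [blockAt_omega, map_smul, Matrix.kronecker_smul, one_div]

/-- `cjMat` as a linear map in `Φ`. -/
def cjL (d : ℕ) : (Matrix (Fin d) (Fin d) ℂ →L[ℂ] Matrix (Fin d) (Fin d) ℂ) →ₗ[ℂ]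
    Matrix (Fin d × Fin d) (Fin d × Fin d) ℂ where
  toFun Φ := cjMat Φ
  map_add' Φ Ψ := by
    simp only [cjMat, ContinuousLinearMap.add_apply, Matrix.kronecker_add,
      Finset.sum_add_distrib, smul_add]
  map_smul' c Φ := by
    simp only [cjMat, ContinuousLinearMap.coe_smul', Pi.smul_apply, Matrix.kronecker_smul,
      ← Finset.smul_sum, RingHom.id_apply, smul_comm c]

lemma cjMat_smul {d : ℕ} (c : ℂ)
    (Φ : Matrix (Fin d) (Fin d) ℂ →L[ℂ] Matrix (Fin d) (Fin d) ℂ) :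
    cjMat (c • Φ) = c • cjMat Φ := (cjL d).map_smul c Φ

lemma cjMat_sub {d : ℕ}
    (Φ Ψ : Matrix (Fin d) (Fin d) ℂ →L[ℂ] Matrix (Fin d) (Fin d) ℂ) :
    cjMat (Φ - Ψ) = cjMat Φ - cjMat Ψ := map_sub (cjL d) Φ Ψ

lemma cjMat_id {d : ℕ} :
    cjMat (ContinuousLinearMap.id ℂ (Matrix (Fin d) (Fin d) ℂ)) = omegaMat d := rfl

/-- **Generators of instantaneous channels are conditionally completely positive.** If
`(E ε − id)/ε` converges to `L` as `ε → 0⁺`, where the `E ε` are quantum channels, then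
`(1 − ω) τ_L (1 − ω)` is positive semidefinite. -/
theorem generator_of_channels_ccp {d : ℕ} (hd : 2 ≤ d)
    (L : Matrix (Fin d) (Fin d) ℂ →L[ℂ] Matrix (Fin d) (Fin d) ℂ)
    (ε₀ : ℝ) (hε₀ : 0 < ε₀)
    (E : ℝ → (Matrix (Fin d) (Fin d) ℂ →L[ℂ] Matrix (Fin d) (Fin d) ℂ))
    (hE : ∀ ε : ℝ, 0 < ε → ε < ε₀ → IsQuantumChannel (E ε))
    (hlim : Filter.Tendsto
      (fun ε : ℝ => (ε : ℂ)⁻¹ • (E ε - ContinuousLinearMap.id ℂ (Matrix (Fin d) (Fin d) ℂ)))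
      (𝓝[>] (0 : ℝ)) (𝓝 L)) :
    ((1 - omegaMat d) * cjMat L * (1 - omegaMat d)).PosSemidef := by
  have hd1 : 1 ≤ d := le_trans one_le_two hd
  have hd0 : (d : ℂ) ≠ 0 := Nat.cast_ne_zero.mpr (by omega)
  set P : Matrix (Fin d × Fin d) (Fin d × Fin d) ℂ := 1 - omegaMat d with hP
  -- ω is positive semidefinite
  have hωPSD : (omegaMat d).PosSemidef := by
    rw [omegaMat_eq]
    have h1 : ((d : ℂ))⁻¹ = (((d : ℝ)⁻¹ : ℝ) : ℂ) := by push_cast; ring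
    rw [h1]
    exact psd_smul_ofReal (Matrix.posSemidef_self_mul_conjTranspose _)
      (inv_nonneg.mpr (Nat.cast_nonneg d))
  -- ω is a projection
  have hωω : omegaMat d * omegaMat d = omegaMat d := by
    have hAA : (wMat d * (wMat d)ᴴ) * (wMat d * (wMat d)ᴴ)
        = (d : ℂ) • (wMat d * (wMat d)ᴴ) := by
      rw [Matrix.mul_assoc, ← Matrix.mul_assoc (wMat d)ᴴ, wMat_conj_mul,
        Matrix.smul_mul, Matrix.one_mul, Matrix.mul_smul]
    rw [omegaMat_eq, smul_mul_assoc, mul_smul_comm, hAA, smul_smul, smul_smul,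
      mul_assoc, inv_mul_cancel₀ hd0, mul_one]
  have hPH : Pᴴ = P := by
    rw [hP, Matrix.conjTranspose_sub, Matrix.conjTranspose_one, hωPSD.1.eq]
  have hPωP : P * omegaMat d * P = 0 := by
    rw [hP, Matrix.sub_mul, Matrix.one_mul, hωω, sub_self, Matrix.zero_mul]
  -- compressed Choi matrices of the channels are PSD
  have hτ : ∀ ε, 0 < ε → ε < ε₀ → (P * cjMat (E ε) * P).PosSemidef := by
    intro ε h1 h2
    have h := (hE ε h1 h2).1 d hd1 (omegaMat d) hωPSD
    rw [matExtend_omega] at h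
    have h' := h.mul_mul_conjTranspose_same P
    rwa [hPH] at h'
  -- continuity of Φ ↦ P * cjMat Φ * P
  have hg : IsLinearMap ℂ (fun Φ : Matrix (Fin d) (Fin d) ℂ →L[ℂ] Matrix (Fin d) (Fin d) ℂ =>
      P * cjMat Φ * P) := by
    constructor
    · intro Φ Ψ
      rw [show cjMat (Φ + Ψ) = cjMat Φ + cjMat Ψ from map_add (cjL d) Φ Ψ,
        Matrix.mul_add, Matrix.add_mul]
    · intro c Φ
      rw [cjMat_smul, mul_smul_comm, smul_mul_assoc]
  have hgc : Continuous (fun Φ : Matrix (Fin d) (Fin d) ℂ →L[ℂ] Matrix (Fin d) (Fin d) ℂ =>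
      P * cjMat Φ * P) := (hg.mk' _).continuous_of_finiteDimensional
  have htend : Filter.Tendsto
      (fun ε : ℝ => P * cjMat ((ε : ℂ)⁻¹ •
        (E ε - ContinuousLinearMap.id ℂ (Matrix (Fin d) (Fin d) ℂ))) * P)
      (𝓝[>] (0 : ℝ)) (𝓝 (P * cjMat L * P)) :=
    (hgc.tendsto L).comp hlim
  have hev : ∀ᶠ ε : ℝ in 𝓝[>] (0 : ℝ),
      (P * cjMat ((ε : ℂ)⁻¹ •
        (E ε - ContinuousLinearMap.id ℂ (Matrix (Fin d) (Fin d) ℂ))) * P)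
        ∈ {A : Matrix (Fin d × Fin d) (Fin d × Fin d) ℂ | A.PosSemidef} := by
    filter_upwards [Ioo_mem_nhdsGT_of_mem (Set.mem_Ico.mpr ⟨le_refl (0 : ℝ), hε₀⟩)] with ε hε
    obtain ⟨hε1, hε2⟩ := hε
    have heq : P * cjMat ((ε : ℂ)⁻¹ •
        (E ε - ContinuousLinearMap.id ℂ (Matrix (Fin d) (Fin d) ℂ))) * P
        = (ε : ℂ)⁻¹ • (P * cjMat (E ε) * P) := by
      rw [cjMat_smul, cjMat_sub, cjMat_id, mul_smul_comm, smul_mul_assoc,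
        Matrix.mul_sub P (cjMat (E ε)) (omegaMat d),
        Matrix.sub_mul (P * cjMat (E ε)) (P * omegaMat d) P, hPωP, sub_zero]
    rw [heq]
    have h := psd_smul_ofReal (hτ ε hε1 hε2) (inv_nonneg.mpr hε1.le)
    rwa [Complex.ofReal_inv] at h
  exact isClosed_posSemidef.mem_of_tendsto htend hev
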